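/- Let ℓ < ∞, and let ξ : Ω → V be locally absolutely continuous with derivative ξ' ∈ L²_ν(Ω;V) and lim_{τ→ℓ} ξ(τ) = 0 in V. Then for every τ ∈ Ω, ν(τ)‖ξ(τ)‖²_V ≤ (ℓ − τ) · ∫₀^ℓ ν(s)‖ξ'(s)‖²_V ds. -/

import Mathlib

open MeasureTheory Set Filter

/-- Case `ℓ < ∞`, `Ω = (0,ℓ)`. If `ξ` is locally absolutely continuous
with derivative `ξ' ∈ L²_ν(Ω;V)` (where `ν = 1/μ`) and `ξ(τ) → 0` as `τ → ℓ⁻`, then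
for every `τ ∈ Ω`, `ν(τ)‖ξ(τ)‖² ≤ (ℓ − τ) ∫₀^ℓ ν(s)‖ξ'(s)‖² ds`. -/
theorem stmt5
    {V : Type*} [NormedAddCommGroup V] [InnerProductSpace ℝ V] [CompleteSpace V]
    (ℓ : ℝ) (hℓ : 0 < ℓ)
    (μ : ℝ → ℝ)
    (hμpos : ∀ s ∈ Ioo 0 ℓ, 0 < μ s)
    (hμmono : AntitoneOn μ (Ioo 0 ℓ))
    (hμint : IntegrableOn μ (Ioo 0 ℓ))
    (ξ ξ' : ℝ → V)
    (hξ'loc : ∀ a b : ℝ, a ∈ Ioo 0 ℓ → b ∈ Ioo 0 ℓ → IntegrableOn ξ' (Icc a b))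
    (hFTC : ∀ a b : ℝ, a ∈ Ioo 0 ℓ → b ∈ Ioo 0 ℓ → a ≤ b → ξ b = ξ a + ∫ s in a..b, ξ' s)
    (hξ'L2 : IntegrableOn (fun s => (μ s)⁻¹ * ‖ξ' s‖ ^ 2) (Ioo 0 ℓ))
    (hξlim : Tendsto ξ (nhdsWithin ℓ (Iio ℓ)) (nhds (0 : V))) :
    ∀ τ ∈ Ioo 0 ℓ,
      (μ τ)⁻¹ * ‖ξ τ‖ ^ 2 ≤ (ℓ - τ) * ∫ s in Ioo 0 ℓ, (μ s)⁻¹ * ‖ξ' s‖ ^ 2 := by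
  intro τ hτ
  obtain ⟨hτ0, hτℓ⟩ := hτ
  set I : ℝ := ∫ s in Ioo 0 ℓ, (μ s)⁻¹ * ‖ξ' s‖ ^ 2 with hIdef
  have hμτ : 0 < μ τ := hμpos τ ⟨hτ0, hτℓ⟩
  have hInonneg : 0 ≤ I := by
    apply setIntegral_nonneg measurableSet_Ioo
    intro s hs
    have := hμpos s hs
    positivity
  have hμmeas : AEMeasurable μ (volume.restrict (Ioo 0 ℓ)) :=
    aemeasurable_restrict_of_antitoneOn measurableSet_Ioo hμmono
  set C : ℝ := Real.sqrt ((ℓ - τ) * μ τ) * Real.sqrt I with hCdef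
  have key : ∀ b ∈ Ico τ ℓ, ‖ξ τ‖ ≤ ‖ξ b‖ + C := by
    intro b hb
    have hbΩ : b ∈ Ioo 0 ℓ := ⟨lt_of_lt_of_le hτ0 hb.1, hb.2⟩
    have hsub : Ioc τ b ⊆ Ioo 0 ℓ := fun s hs =>
      ⟨hτ0.trans hs.1, lt_of_le_of_lt hs.2 hb.2⟩
    have h1 : ‖ξ τ‖ ≤ ‖ξ b‖ + ‖∫ s in τ..b, ξ' s‖ := by
      have hξτ : ξ τ = ξ b - ∫ s in τ..b, ξ' s := by
        rw [hFTC τ b ⟨hτ0, hτℓ⟩ hbΩ hb.1]; abel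
      rw [hξτ]; exact norm_sub_le _ _
    have hint : IntegrableOn ξ' (Ioc τ b) :=
      (hξ'loc τ b ⟨hτ0, hτℓ⟩ hbΩ).mono_set Ioc_subset_Icc_self
    have h2 : ‖∫ s in τ..b, ξ' s‖ ≤ ∫ s in Ioc τ b, ‖ξ' s‖ := by
      rw [intervalIntegral.integral_of_le hb.1]
      exact norm_integral_le_integral_norm _
    -- Cauchy–Schwarz on Ioc τ b
    set ρ := volume.restrict (Ioc τ b) with hρdef
    have hρle : ρ ≤ volume.restrict (Ioo 0 ℓ) := Measure.restrict_mono hsub le_rfl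
    have hμmeas' : AEMeasurable μ ρ := hμmeas.mono_measure hρle
    have hf_meas : AEStronglyMeasurable (fun s => Real.sqrt (μ s)) ρ :=
      (Real.continuous_sqrt.measurable.comp_aemeasurable hμmeas').aestronglyMeasurable
    have hg_meas : AEStronglyMeasurable (fun s => Real.sqrt ((μ s)⁻¹) * ‖ξ' s‖) ρ :=
      ((Real.continuous_sqrt.measurable.comp_aemeasurable
        hμmeas'.inv).aestronglyMeasurable).mul hint.1.norm
    have haeΩ : ∀ᵐ s ∂ρ, s ∈ Ioc τ b := ae_restrict_mem measurableSet_Ioc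
    have hf2_int : Integrable (fun s => Real.sqrt (μ s) ^ 2) ρ := by
      refine (hμint.mono_set hsub).congr ?_
      filter_upwards [haeΩ] with s hs
      exact (Real.sq_sqrt (hμpos s (hsub hs)).le).symm
    have hg2_int : Integrable (fun s => (Real.sqrt ((μ s)⁻¹) * ‖ξ' s‖) ^ 2) ρ := by
      refine (hξ'L2.mono_set hsub).congr ?_
      filter_upwards [haeΩ] with s hs
      rw [mul_pow, Real.sq_sqrt (inv_nonneg.2 (hμpos s (hsub hs)).le)]
    have hf2 : MemLp (fun s => Real.sqrt (μ s)) (ENNReal.ofReal 2) ρ := by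
      rw [show ENNReal.ofReal 2 = 2 by norm_num]
      exact (memLp_two_iff_integrable_sq hf_meas).2 hf2_int
    have hg2 : MemLp (fun s => Real.sqrt ((μ s)⁻¹) * ‖ξ' s‖) (ENNReal.ofReal 2) ρ := by
      rw [show ENNReal.ofReal 2 = 2 by norm_num]
      exact (memLp_two_iff_integrable_sq hg_meas).2 hg2_int
    have hpq : Real.HolderConjugate 2 2 := Real.HolderConjugate.two_two
    have hf_nonneg : 0 ≤ᵐ[ρ] fun s => Real.sqrt (μ s) :=
      Eventually.of_forall fun s => Real.sqrt_nonneg _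
    have hg_nonneg : 0 ≤ᵐ[ρ] fun s => Real.sqrt ((μ s)⁻¹) * ‖ξ' s‖ :=
      Eventually.of_forall fun s => mul_nonneg (Real.sqrt_nonneg _) (norm_nonneg _)
    have hCS := integral_mul_le_Lp_mul_Lq_of_nonneg hpq hf_nonneg hg_nonneg hf2 hg2
    -- rewrite the three integrals in hCS
    have hLHS : (∫ s, Real.sqrt (μ s) * (Real.sqrt ((μ s)⁻¹) * ‖ξ' s‖) ∂ρ)
        = ∫ s in Ioc τ b, ‖ξ' s‖ := by
      refine integral_congr_ae ?_
      filter_upwards [haeΩ] with s hs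
      have hμs := hμpos s (hsub hs)
      rw [← mul_assoc, ← Real.sqrt_mul hμs.le, mul_inv_cancel₀ hμs.ne', Real.sqrt_one,
        one_mul]
    have hRf : (∫ s, Real.sqrt (μ s) ^ (2 : ℝ) ∂ρ) = ∫ s in Ioc τ b, μ s := by
      refine integral_congr_ae ?_
      filter_upwards [haeΩ] with s hs
      rw [Real.rpow_two, Real.sq_sqrt (hμpos s (hsub hs)).le]
    have hRg : (∫ s, (Real.sqrt ((μ s)⁻¹) * ‖ξ' s‖) ^ (2 : ℝ) ∂ρ)
        = ∫ s in Ioc τ b, (μ s)⁻¹ * ‖ξ' s‖ ^ 2 := by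
      refine integral_congr_ae ?_
      filter_upwards [haeΩ] with s hs
      rw [Real.rpow_two, mul_pow, Real.sq_sqrt (inv_nonneg.2 (hμpos s (hsub hs)).le)]
    rw [hLHS, hRf, hRg] at hCS
    -- bound the two factors
    have hμbound : (∫ s in Ioc τ b, μ s) ≤ (ℓ - τ) * μ τ := by
      have h1 : (∫ s in Ioc τ b, μ s) ≤ ∫ _s in Ioc τ b, μ τ := by
        refine setIntegral_mono_on (hμint.mono_set hsub) (integrableOn_const ?_)
          measurableSet_Ioc ?_
        · rw [Real.volume_Ioc]; exact ENNReal.ofReal_ne_top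
        · intro s hs
          exact hμmono ⟨hτ0, hτℓ⟩ (hsub hs) hs.1.le
      have h2 : (∫ _s in Ioc τ b, μ τ) = (b - τ) * μ τ := by
        rw [setIntegral_const, Real.volume_real_Ioc, smul_eq_mul,
          max_eq_left (by linarith [hb.1] : (0:ℝ) ≤ b - τ)]
      have h3 : (b - τ) * μ τ ≤ (ℓ - τ) * μ τ := by
        apply mul_le_mul_of_nonneg_right _ hμτ.le
        linarith [hb.2]
      linarith
    have hIbound : (∫ s in Ioc τ b, (μ s)⁻¹ * ‖ξ' s‖ ^ 2) ≤ I := by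
      refine setIntegral_mono_set hξ'L2 ?_ (HasSubset.Subset.eventuallyLE hsub)
      filter_upwards [ae_restrict_mem measurableSet_Ioo] with s hs
      have := hμpos s hs
      positivity
    have hstep : (∫ s in Ioc τ b, ‖ξ' s‖) ≤ C := by
      calc (∫ s in Ioc τ b, ‖ξ' s‖)
          ≤ (∫ s in Ioc τ b, μ s) ^ (1/(2:ℝ))
            * (∫ s in Ioc τ b, (μ s)⁻¹ * ‖ξ' s‖ ^ 2) ^ (1/(2:ℝ)) := hCS
        _ ≤ ((ℓ - τ) * μ τ) ^ (1/(2:ℝ)) * I ^ (1/(2:ℝ)) := by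
            have hμintnn : 0 ≤ ∫ s in Ioc τ b, μ s := by
              apply setIntegral_nonneg measurableSet_Ioc
              intro s hs; exact (hμpos s (hsub hs)).le
            have hνintnn : 0 ≤ ∫ s in Ioc τ b, (μ s)⁻¹ * ‖ξ' s‖ ^ 2 := by
              apply setIntegral_nonneg measurableSet_Ioc
              intro s hs
              have := hμpos s (hsub hs)
              positivity
            have hA := Real.rpow_le_rpow hμintnn hμbound (by norm_num : (0:ℝ) ≤ 1/2)
            have hB := Real.rpow_le_rpow hνintnn hIbound (by norm_num : (0:ℝ) ≤ 1/2)
            exact mul_le_mul hA hB (Real.rpow_nonneg hνintnn _)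
              (Real.rpow_nonneg (by nlinarith) _)
        _ = C := by
            rw [hCdef, Real.sqrt_eq_rpow, Real.sqrt_eq_rpow]
    linarith
  -- pass to the limit b → ℓ⁻
  have hlim : Tendsto (fun b => ‖ξ b‖ + C) (nhdsWithin ℓ (Iio ℓ)) (nhds C) := by
    have := (hξlim.norm).add (tendsto_const_nhds (x := C))
    simpa using this
  have hev : ∀ᶠ b in nhdsWithin ℓ (Iio ℓ), ‖ξ τ‖ ≤ ‖ξ b‖ + C := by
    filter_upwards [Ioo_mem_nhdsLT_of_mem (⟨hτℓ, le_refl ℓ⟩ : ℓ ∈ Ioc τ ℓ)] with b hb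
    exact key b ⟨hb.1.le, hb.2⟩
  have hle : ‖ξ τ‖ ≤ C := ge_of_tendsto hlim hev
  have hsq : ‖ξ τ‖ ^ 2 ≤ (ℓ - τ) * μ τ * I := by
    have h1 : ‖ξ τ‖ ^ 2 ≤ C ^ 2 := by
      have := pow_le_pow_left₀ (norm_nonneg _) hle 2
      simpa using this
    have h2 : C ^ 2 = (ℓ - τ) * μ τ * I := by
      rw [hCdef, mul_pow, Real.sq_sqrt (by nlinarith : (0:ℝ) ≤ (ℓ - τ) * μ τ),
        Real.sq_sqrt hInonneg]
    linarith
  have : (μ τ)⁻¹ * ‖ξ τ‖ ^ 2 ≤ (μ τ)⁻¹ * ((ℓ - τ) * μ τ * I) := by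
    apply mul_le_mul_of_nonneg_left hsq (inv_nonneg.2 hμτ.le)
  calc (μ τ)⁻¹ * ‖ξ τ‖ ^ 2 ≤ (μ τ)⁻¹ * ((ℓ - τ) * μ τ * I) := this
    _ = (ℓ - τ) * I := by field_simp
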